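/- Let n, N, m be positive integers with n + 1 ≤ N, and let Δ ∈ ℝ^m be such that for every positive integer k there exists an index i with Int.fract(k·Δ_i/(2N)) ∈ [0, n/N]. Let R = {a ∈ ℤ^m : a_1·Δ_1 + … + a_m·Δ_m ∈ 2N·ℤ} and suppose R = ℤ·a₀ for some a₀ ∈ ℤ^m with at least one strictly positive component. Then the sum of the components satisfies ∑_{i=1}^m (a₀)_i ≤ N/(N − n). -/

import Mathlib

open Complex Finset in
lemma cos_pow_expand (x : ℝ) (p : ℕ) :
    ((1 + Real.cos x : ℝ) : ℂ) ^ p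
      = (1/2 : ℂ) ^ p * ∑ k ∈ Finset.range (2*p+1),
          ((2*p).choose k : ℂ) * Complex.exp ((((k:ℝ) - p) * x : ℝ) * Complex.I) := by
  have h1 : (1 + Real.cos x : ℝ) = 2 * Real.cos (x/2) ^ 2 := by
    rw [Real.cos_sq]; ring_nf
  have h2 : (Real.cos (x/2) : ℂ) = (Complex.exp ((x/2 : ℝ) * I) + Complex.exp (-(((x/2):ℝ)) * I)) / 2 := by
    rw [ofReal_cos, Complex.cos]
  have key : ((1 + Real.cos x : ℝ) : ℂ) ^ p
      = (1/2 : ℂ) ^ p * (Complex.exp ((x/2 : ℝ) * I) + Complex.exp (-(((x/2):ℝ)) * I)) ^ (2*p) := by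
    rw [h1]
    push_cast at h2 ⊢
    rw [h2, div_pow, pow_mul, ← mul_pow]
    congr 1
    ring
  rw [key, add_pow, Finset.mul_sum, Finset.mul_sum]
  apply Finset.sum_congr rfl
  intro k hk
  rw [Finset.mem_range] at hk
  have hk' : k ≤ 2*p := by omega
  rw [← Complex.exp_nat_mul, ← Complex.exp_nat_mul, ← Complex.exp_add]
  have harg : ((k:ℕ):ℂ) * (((x/2 : ℝ):ℂ) * I) + ((2*p - k : ℕ):ℂ) * (-((x/2 : ℝ):ℂ) * I)
      = ((((k:ℝ) - p) * x : ℝ):ℂ) * I := by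
    have h3 : ((2*p - k : ℕ) : ℂ) = 2*(p:ℂ) - k := by
      push_cast [Nat.cast_sub hk']; ring
    rw [h3]
    push_cast
    ring
  rw [harg]
  ring

lemma cos_window {η v : ℝ} (hη0 : 0 < η) (hη2 : η ≤ 1/2) (h1 : η ≤ v) (h2 : v ≤ 1 - η) :
    Real.cos (2*Real.pi*v) ≤ Real.cos (2*Real.pi*η) := by
  have hπ := Real.pi_pos
  rcases le_total v (1/2) with hv | hv
  · apply Real.cos_le_cos_of_nonneg_of_le_pi
    · positivity
    · nlinarith
    · nlinarith
  · have hmv : Real.cos (2*Real.pi*v) = Real.cos (2*Real.pi*(1-v)) := by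
      have harg : 2*Real.pi*v = -(2*Real.pi*(1-v)) + ((1:ℤ):ℝ) * (2*Real.pi) := by push_cast; ring
      rw [harg, Real.cos_add_int_mul_two_pi, Real.cos_neg]
    rw [hmv]
    apply Real.cos_le_cos_of_nonneg_of_le_pi
    · positivity
    · nlinarith
    · nlinarith

noncomputable def ec (r : ℝ) : ℂ := Complex.exp ((2*Real.pi*r : ℝ) * Complex.I)

lemma ec_norm (r : ℝ) : ‖ec r‖ = 1 := Complex.norm_exp_ofReal_mul_I _

open Finset in
lemma tsum_lemma (β γ : ℝ) (T : ℕ) :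
    ∑ t ∈ range T, ec (((t+1:ℕ):ℝ)*β + γ) = ec (β+γ) * ∑ t ∈ range T, (ec β)^t := by
  rw [Finset.mul_sum]
  apply Finset.sum_congr rfl
  intro t _
  show Complex.exp _ = _
  rw [ec, ec, ← Complex.exp_nat_mul, ← Complex.exp_add]
  congr 1
  push_cast
  ring

lemma res_lemma (β : ℝ) (hz : ec β = 1) : ∃ c : ℤ, β = c := by
  rw [ec, Complex.exp_eq_one_iff] at hz
  obtain ⟨c, hc⟩ := hz
  refine ⟨c, ?_⟩
  have hc' : ((2*Real.pi*β:ℝ):ℂ) * Complex.I = (((2*Real.pi*(c:ℝ)):ℝ):ℂ) * Complex.I := by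
    rw [hc]; push_cast; ring
  have h2 := mul_right_cancel₀ Complex.I_ne_zero hc'
  have h3 : (2*Real.pi*β : ℝ) = 2*Real.pi*(c:ℝ) := by exact_mod_cast h2
  have hπ := Real.pi_ne_zero
  field_simp at h3
  tauto

lemma ec_int (c : ℤ) : ec c = 1 := by
  rw [ec, Complex.exp_eq_one_iff]
  exact ⟨c, by push_cast; ring⟩

open Finset in
lemma geom_bound (z w : ℂ) (hw : ‖w‖ = 1) (hz1 : ‖z‖ = 1) (hz : z ≠ 1) (T : ℕ) :
    ‖w * ∑ t ∈ range T, z^t‖ ≤ 2 / ‖z - 1‖ := by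
  rw [geom_sum_eq hz, norm_mul, hw, one_mul, norm_div]
  have hz0 : (0:ℝ) < ‖z - 1‖ := by
    rw [norm_pos_iff]
    intro hzz
    exact hz (sub_eq_zero.mp hzz)
  gcongr
  calc ‖z^T - 1‖ ≤ ‖z^T‖ + ‖(1:ℂ)‖ := norm_sub_le _ _
    _ = 2 := by rw [norm_pow, hz1]; norm_num

open Finset in
lemma bohr_bound (m p : ℕ) (θ : Fin m → ℝ) (Sr Q : ℝ) (hSr0 : Sr ≠ 0) (hQ0 : 0 ≤ Q)
    (hres : ∀ b : Fin m → ℤ, ∀ c : ℤ, (∑ i, (b i : ℝ) * θ i) = (c:ℝ) →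
      ∃ d : ℤ, (∑ i, (b i : ℝ)) = (d:ℝ) * Sr)
    (hub : ∀ t : ℕ, 0 < t →
      ∏ i, (1 + Real.cos (2*Real.pi*((t:ℝ)*θ i + 1/Sr))) ≤ Q) :
    (((2*p).choose p : ℝ))^m ≤ 2^(p*m) * Q^p := by
  classical
  set P : Finset (Fin m → ℕ) := Fintype.piFinset (fun _ : Fin m => Finset.range (2*p+1)) with hP
  set W : (Fin m → ℕ) → ℝ := fun k => ∏ i, (((2*p).choose (k i) : ℝ)) with hWdef
  set βf : (Fin m → ℕ) → ℝ := fun k => ∑ i, ((k i : ℝ) - p) * θ i with hβdef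
  set γf : (Fin m → ℕ) → ℝ := fun k => (∑ i, ((k i : ℝ) - p)) / Sr with hγdef
  set F : ℕ → ℝ := fun t => ∏ i, (1 + Real.cos (2*Real.pi*((t:ℝ)*θ i + 1/Sr))) with hFdef
  have hW0 : ∀ k, 0 ≤ W k := by
    intro k
    rw [hWdef]
    exact Finset.prod_nonneg fun i _ => by positivity
  have hF0 : ∀ t, 0 ≤ F t := by
    intro t
    rw [hFdef]
    apply Finset.prod_nonneg
    intro i _
    have := Real.neg_one_le_cos (2*Real.pi*((t:ℝ)*θ i + 1/Sr))
    linarith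
  -- pointwise expansion
  have expand : ∀ t : ℕ, ((F t : ℝ) : ℂ)^p
      = (1/2:ℂ)^(p*m) * ∑ k ∈ P, (W k : ℂ) * ec ((t:ℝ)*βf k + γf k) := by
    intro t
    rw [hFdef]
    rw [Complex.ofReal_prod, ← Finset.prod_pow]
    have step1 : ∀ i : Fin m, ((1 + Real.cos (2*Real.pi*((t:ℝ)*θ i + 1/Sr)) : ℝ) : ℂ)^p
        = (1/2 : ℂ) ^ p * ∑ j ∈ Finset.range (2*p+1),
            ((2*p).choose j : ℂ)
              * Complex.exp ((((j:ℝ) - p) * (2*Real.pi*((t:ℝ)*θ i + 1/Sr)) : ℝ) * Complex.I) :=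
      fun i => cos_pow_expand _ p
    rw [Finset.prod_congr rfl (fun i _ => step1 i), Finset.prod_mul_distrib,
      Finset.prod_const, Finset.card_univ, Fintype.card_fin, ← pow_mul,
      Finset.prod_univ_sum]
    rw [hP]
    congr 1
    apply Finset.sum_congr rfl
    intro k hk
    rw [Finset.prod_mul_distrib]
    congr 1
    · rw [hWdef, Complex.ofReal_prod]
      push_cast
      rfl
    · rw [← Complex.exp_sum, ec]
      congr 1
      have harg : ∑ i, ((((k i:ℝ) - p) * (2*Real.pi*((t:ℝ)*θ i + 1/Sr)) : ℝ) : ℂ) * Complex.I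
          = ((∑ i, (((k i:ℝ) - p) * (2*Real.pi*((t:ℝ)*θ i + 1/Sr))) : ℝ) : ℂ) * Complex.I := by
        rw [Complex.ofReal_sum, Finset.sum_mul]
      rw [harg]
      congr 2
      simp only [hβdef, hγdef]
      rw [Finset.mul_sum, Finset.sum_div, mul_add, Finset.mul_sum, Finset.mul_sum,
        ← Finset.sum_add_distrib]
      apply Finset.sum_congr rfl
      intro i _
      ring
  -- master identity
  have master : ∀ T : ℕ, (∑ t ∈ range T, (F (t+1))^p)
      = (1/2:ℝ)^(p*m) * ∑ k ∈ P, W k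
          * (ec (βf k + γf k) * ∑ t ∈ range T, (ec (βf k))^t).re := by
    intro T
    have h1 : ((∑ t ∈ range T, (F (t+1))^p : ℝ) : ℂ)
        = (1/2:ℂ)^(p*m) * ∑ k ∈ P, (W k:ℂ)
            * (ec (βf k + γf k) * ∑ t ∈ range T, (ec (βf k))^t) := by
      rw [Complex.ofReal_sum]
      have h2 : ∀ t ∈ range T, ((F (t+1) ^ p : ℝ) : ℂ)
          = (1/2:ℂ)^(p*m) * ∑ k ∈ P, (W k : ℂ) * ec ((((t+1:ℕ)):ℝ)*βf k + γf k) := by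
        intro t _
        rw [Complex.ofReal_pow]
        exact expand (t+1)
      rw [Finset.sum_congr rfl h2, ← Finset.mul_sum]
      congr 1
      rw [Finset.sum_comm]
      apply Finset.sum_congr rfl
      intro k _
      rw [← Finset.mul_sum, tsum_lemma]
    have h3 : (∑ t ∈ range T, (F (t+1))^p)
        = ((1/2:ℂ)^(p*m) * ∑ k ∈ P, (W k:ℂ)
            * (ec (βf k + γf k) * ∑ t ∈ range T, (ec (βf k))^t)).re := by
      rw [← h1, Complex.ofReal_re]
    rw [h3, show ((1/2:ℂ)) = ((1/2:ℝ):ℂ) by norm_num, ← Complex.ofReal_pow,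
      Complex.re_ofReal_mul, Complex.re_sum]
    congr 1
    apply Finset.sum_congr rfl
    intro k _
    rw [Complex.re_ofReal_mul]
  -- resonance: z = 1 implies w = 1
  have hres' : ∀ k : Fin m → ℕ, ec (βf k) = 1 → ec (βf k + γf k) = 1 := by
    intro k h1
    obtain ⟨c, hc⟩ := res_lemma _ h1
    have hbθ : (∑ i, (((k i : ℤ) - (p:ℤ) : ℤ) : ℝ) * θ i) = (c:ℝ) := by
      rw [← hc, hβdef]
      apply Finset.sum_congr rfl
      intro i _
      push_cast
      ring
    obtain ⟨d, hd⟩ := hres (fun i => (k i : ℤ) - (p:ℤ)) c hbθ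
    have hγd : γf k = d := by
      simp only [hγdef]
      rw [div_eq_iff hSr0, ← hd]
      apply Finset.sum_congr rfl
      intro i _
      push_cast
      ring
    have hβγ : βf k + γf k = ((c + d : ℤ) : ℝ) := by
      rw [hc, hγd]; push_cast; ring
    rw [hβγ]
    exact ec_int _
  -- k₀
  have hk0P : (fun _ : Fin m => p) ∈ P := by
    rw [hP]
    apply Fintype.mem_piFinset.mpr
    intro i
    exact Finset.mem_range.mpr (by omega)
  have hβ0 : βf (fun _ : Fin m => p) = 0 := by
    simp [hβdef]
  have hz0 : ec (βf (fun _ : Fin m => p)) = 1 := by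
    rw [hβ0, show (0:ℝ) = ((0:ℤ):ℝ) by norm_num]
    exact ec_int 0
  have hW0' : W (fun _ : Fin m => p) = (((2*p).choose p : ℝ))^m := by
    rw [hWdef]
    simp [Finset.prod_const]
  -- the constant C
  set C : ℝ := ∑ k ∈ P, W k * (if ec (βf k) = 1 then 0 else 2 / ‖ec (βf k) - 1‖) with hCdef
  -- lower bound
  have lower : ∀ T : ℕ, (((2*p).choose p : ℝ))^m * T - C
      ≤ ∑ k ∈ P, W k * (ec (βf k + γf k) * ∑ t ∈ range T, (ec (βf k))^t).re := by
    intro T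
    have per : ∀ k ∈ P,
        W k * ((if ec (βf k) = 1 then (T:ℝ) else 0)
          - (if ec (βf k) = 1 then 0 else 2 / ‖ec (βf k) - 1‖))
        ≤ W k * (ec (βf k + γf k) * ∑ t ∈ range T, (ec (βf k))^t).re := by
      intro k _
      apply mul_le_mul_of_nonneg_left ?_ (hW0 k)
      by_cases hzk : ec (βf k) = 1
      · rw [if_pos hzk, if_pos hzk, hres' k hzk, hzk]
        simp
      · rw [if_neg hzk, if_neg hzk]
        have hb := geom_bound (ec (βf k)) (ec (βf k + γf k)) (ec_norm _) (ec_norm _) hzk T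
        have hre := Complex.abs_re_le_norm (ec (βf k + γf k) * ∑ t ∈ range T, (ec (βf k))^t)
        have := abs_le.mp (le_trans hre hb)
        linarith [this.1]
    have e1 : ∑ k ∈ P, W k * ((if ec (βf k) = 1 then (T:ℝ) else 0)
          - (if ec (βf k) = 1 then 0 else 2 / ‖ec (βf k) - 1‖))
        = (∑ k ∈ P, W k * (if ec (βf k) = 1 then (T:ℝ) else 0)) - C := by
      rw [hCdef, ← Finset.sum_sub_distrib]
      apply Finset.sum_congr rfl
      intro k _
      ring
    have e2 : (((2*p).choose p : ℝ))^m * T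
        ≤ ∑ k ∈ P, W k * (if ec (βf k) = 1 then (T:ℝ) else 0) := by
      have hterm : (((2*p).choose p : ℝ))^m * T
          = W (fun _ : Fin m => p) * (if ec (βf (fun _ : Fin m => p)) = 1 then (T:ℝ) else 0) := by
        rw [if_pos hz0, hW0']
      rw [hterm]
      apply Finset.single_le_sum (f := fun k => W k * (if ec (βf k) = 1 then (T:ℝ) else 0))
        ?_ hk0P
      intro k _
      have : (0:ℝ) ≤ (if ec (βf k) = 1 then (T:ℝ) else 0) := by positivity
      exact mul_nonneg (hW0 k) this
    have := Finset.sum_le_sum per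
    linarith [e1 ▸ this]
  -- upper bound
  have upper : ∀ T : ℕ, (∑ t ∈ range T, (F (t+1))^p) ≤ (T:ℝ) * Q^p := by
    intro T
    calc ∑ t ∈ range T, (F (t+1))^p ≤ ∑ _t ∈ range T, Q^p := by
          apply Finset.sum_le_sum
          intro t _
          exact pow_le_pow_left₀ (hF0 _) (hub (t+1) (Nat.succ_pos t)) p
      _ = (T:ℝ) * Q^p := by rw [Finset.sum_const, Finset.card_range, nsmul_eq_mul]
  -- combine
  have final : ∀ T : ℕ, (1/2:ℝ)^(p*m) * ((((2*p).choose p : ℝ))^m * T - C) ≤ (T:ℝ) * Q^p := by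
    intro T
    calc (1/2:ℝ)^(p*m) * ((((2*p).choose p : ℝ))^m * T - C)
        ≤ (1/2:ℝ)^(p*m) * ∑ k ∈ P, W k
            * (ec (βf k + γf k) * ∑ t ∈ range T, (ec (βf k))^t).re := by
          apply mul_le_mul_of_nonneg_left (lower T) (by positivity)
      _ = ∑ t ∈ range T, (F (t+1))^p := (master T).symm
      _ ≤ (T:ℝ) * Q^p := upper T
  have hBQ : (1/2:ℝ)^(p*m) * (((2*p).choose p : ℝ))^m ≤ Q^p := by
    by_contra hBQ'
    push_neg at hBQ'
    set B : ℝ := (1/2:ℝ)^(p*m) * (((2*p).choose p : ℝ))^m with hBdef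
    have hd : 0 < B - Q^p := by linarith
    obtain ⟨T, hT⟩ := exists_nat_gt (((1/2:ℝ)^(p*m) * C) / (B - Q^p))
    rw [div_lt_iff₀ hd] at hT
    have h1 := final T
    nlinarith
  calc (((2*p).choose p : ℝ))^m
      = ((1/2:ℝ)^(p*m) * (((2*p).choose p : ℝ))^m) * 2^(p*m) := by
        rw [mul_comm ((1/2:ℝ)^(p*m)) _, mul_assoc, ← mul_pow]
        norm_num
    _ ≤ Q^p * 2^(p*m) := by
        apply mul_le_mul_of_nonneg_right hBQ (by positivity)
    _ = 2^(p*m) * Q^p := by ring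

/-- Quantitative bound of Theorem 1.1(ii): if the group of resonances of `Δ`
modulo `2N` is generated by a single vector `a₀` with at least one strictly
positive component, then `∑ (a₀)_i ≤ N/(N-n)`. -/
theorem stmt_2 (n N m : ℕ) (hn : 0 < n) (hN : n + 1 ≤ N) (hm : 0 < m)
    (Δ : Fin m → ℝ)
    (h : ∀ k : ℕ, 0 < k →
      ∃ i : Fin m, Int.fract ((k : ℝ) * Δ i / (2 * N)) ∈ Set.Icc 0 ((n : ℝ) / N))
    (a₀ : Fin m → ℤ)
    (hR : {a : Fin m → ℤ | ∃ z : ℤ, ∑ i, (a i : ℝ) * Δ i = 2 * N * z}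
        = {a : Fin m → ℤ | ∃ c : ℤ, a = c • a₀})
    (hpos : ∃ i, 0 < a₀ i) :
    (∑ i, (a₀ i : ℝ)) ≤ (N : ℝ) / ((N : ℝ) - (n : ℝ)) := by
  by_contra hcon
  push_neg at hcon
  have hπ := Real.pi_pos
  have hN0 : (0:ℝ) < N := by
    have : (0:ℕ) < N := by omega
    exact_mod_cast this
  have hNn : (0:ℝ) < (N:ℝ) - n := by
    have : (n:ℝ) < N := by exact_mod_cast (by omega : n < N)
    linarith
  set Sr : ℝ := ∑ i, (a₀ i : ℝ) with hSrdef
  have hquot1 : (1:ℝ) ≤ (N:ℝ)/((N:ℝ)-n) := by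
    rw [le_div_iff₀ hNn]
    have : (0:ℝ) ≤ n := by positivity
    linarith
  have hSr1 : (1:ℝ) < Sr := lt_of_le_of_lt hquot1 hcon
  have hSr0 : (0:ℝ) < Sr := by linarith
  have hfr : 1/Sr < ((N:ℝ)-n)/N := by
    have h1 : (0:ℝ) < (N:ℝ)/((N:ℝ)-n) := by positivity
    have h2 := one_div_lt_one_div_of_lt h1 hcon
    rwa [one_div_div] at h2
  -- Sr is an integer ≥ 2
  have hSZ : ((∑ i, a₀ i : ℤ) : ℝ) = Sr := by rw [hSrdef]; push_cast; rfl
  have hSr2 : (2:ℝ) ≤ Sr := by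
    have h1 : (1:ℤ) < ∑ i, a₀ i := by
      have := hSr1
      rw [← hSZ] at this
      exact_mod_cast this
    have h2 : (2:ℤ) ≤ ∑ i, a₀ i := by omega
    rw [← hSZ]
    exact_mod_cast h2
  have hhalf : 1/Sr ≤ 1/2 := by
    rw [div_le_div_iff₀ hSr0 (by norm_num)]
    linarith
  set η : ℝ := min (1/Sr) (1 - (n:ℝ)/N - 1/Sr) with hηdef
  have hη0 : 0 < η := by
    apply lt_min (by positivity)
    have he : (n:ℝ)/N = 1 - ((N:ℝ)-n)/N := by field_simp; ring
    rw [he]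
    linarith
  have hη2 : η ≤ 1/2 := le_trans (min_le_left _ _) hhalf
  set ρ : ℝ := (1 + Real.cos (2*Real.pi*η))/2 with hρdef
  have hρ0 : 0 ≤ ρ := by
    have := Real.neg_one_le_cos (2*Real.pi*η)
    rw [hρdef]; linarith
  have hρ1 : ρ < 1 := by
    have hc : Real.cos (2*Real.pi*η) < Real.cos 0 := by
      apply Real.strictAntiOn_cos
      · exact Set.mem_Icc.mpr ⟨le_refl 0, Real.pi_pos.le⟩
      · constructor
        · positivity
        · nlinarith
      · positivity
    rw [Real.cos_zero] at hc
    rw [hρdef]; linarith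
  -- choose p
  obtain ⟨p, hp1, hp⟩ : ∃ p : ℕ, 1 ≤ p ∧ ((2*(p:ℝ))^m * ρ^p < 1) := by
    have hlim := tendsto_pow_const_mul_const_pow_of_lt_one m hρ0 hρ1
    have hlim2 := hlim.const_mul ((2:ℝ)^m)
    rw [mul_zero] at hlim2
    have hlim3 : Filter.Tendsto (fun p : ℕ => (2*(p:ℝ))^m * ρ^p) Filter.atTop (nhds 0) := by
      convert hlim2 using 2 with q
      ring
    have := (hlim3.eventually_lt_const (by norm_num : (0:ℝ) < 1)).and
      (Filter.eventually_ge_atTop 1)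
    obtain ⟨p, hp⟩ := this.exists
    exact ⟨p, hp.2, hp.1⟩
  -- set up θ
  set θ : Fin m → ℝ := fun i => Δ i / (2*N) with hθdef
  -- apply bohr_bound with Q = 2^m * ρ
  have key := bohr_bound m p θ Sr (2^m * ρ) (ne_of_gt hSr0) (by positivity) ?hres ?hub
  case hres =>
    intro b c hbc
    have hbΔ : ∑ i, (b i : ℝ) * Δ i = 2 * N * c := by
      rw [← hbc, Finset.mul_sum]
      apply Finset.sum_congr rfl
      intro i _
      rw [hθdef]
      field_simp
    have hmem : b ∈ {a : Fin m → ℤ | ∃ z : ℤ, ∑ i, (a i : ℝ) * Δ i = 2 * N * z} := ⟨c, hbΔ⟩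
    rw [hR] at hmem
    obtain ⟨d, hd⟩ := hmem
    refine ⟨d, ?_⟩
    rw [hd, hSrdef, Finset.mul_sum]
    push_cast
    apply Finset.sum_congr rfl
    intro i _
    simp [mul_comm]
  case hub =>
    intro t ht
    obtain ⟨i, hi⟩ := h t ht
    obtain ⟨hi0, hi1⟩ := Set.mem_Icc.mp hi
    have htθ : (t:ℝ) * Δ i / (2*N) = (t:ℝ) * θ i := by rw [hθdef]; ring
    set u : ℝ := Int.fract ((t:ℝ) * Δ i / (2*N)) with hudef
    have hufr : u = (t:ℝ) * θ i - ⌊(t:ℝ) * θ i⌋ := by rw [hudef, htθ]; rfl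
    have hfact : 1 + Real.cos (2*Real.pi*((t:ℝ) * θ i + 1/Sr)) ≤ 2*ρ := by
      have hcosper : Real.cos (2*Real.pi*((t:ℝ)*θ i + 1/Sr))
          = Real.cos (2*Real.pi*(u + 1/Sr)) := by
        have harg : 2*Real.pi*((t:ℝ)*θ i + 1/Sr)
            = 2*Real.pi*(u + 1/Sr) + (⌊(t:ℝ)*θ i⌋ : ℤ) * (2*Real.pi) := by
          rw [hufr]; ring
        rw [harg, Real.cos_add_int_mul_two_pi]
      rw [hcosper]
      have hv1 : η ≤ u + 1/Sr := le_trans (min_le_left _ _) (by linarith)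
      have hv2 : u + 1/Sr ≤ 1 - η := by
        have := min_le_right (1/Sr) (1 - (n:ℝ)/N - 1/Sr)
        linarith
      have := cos_window hη0 hη2 hv1 hv2
      rw [hρdef]
      linarith
    -- product bound
    have hprod : ∏ j, (1 + Real.cos (2*Real.pi*((t:ℝ)*θ j + 1/Sr))) ≤ 2^m * ρ := by
      rw [← Finset.mul_prod_erase Finset.univ _ (Finset.mem_univ i)]
      have hrest : ∏ j ∈ Finset.univ.erase i, (1 + Real.cos (2*Real.pi*((t:ℝ)*θ j + 1/Sr)))
          ≤ 2^(m-1) := by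
        calc ∏ j ∈ Finset.univ.erase i, (1 + Real.cos (2*Real.pi*((t:ℝ)*θ j + 1/Sr)))
            ≤ ∏ _j ∈ Finset.univ.erase i, (2:ℝ) := by
              apply Finset.prod_le_prod
              · intro j _
                have := Real.neg_one_le_cos (2*Real.pi*((t:ℝ)*θ j + 1/Sr))
                linarith
              · intro j _
                have := Real.cos_le_one (2*Real.pi*((t:ℝ)*θ j + 1/Sr))
                linarith
          _ = 2^(m-1) := by
              rw [Finset.prod_const, Finset.card_erase_of_mem (Finset.mem_univ i),
                Finset.card_univ, Fintype.card_fin]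
        
      have hrest0 : (0:ℝ) ≤ ∏ j ∈ Finset.univ.erase i, (1 + Real.cos (2*Real.pi*((t:ℝ)*θ j + 1/Sr))) := by
        apply Finset.prod_nonneg
        intro j _
        have := Real.neg_one_le_cos (2*Real.pi*((t:ℝ)*θ j + 1/Sr))
        linarith
      have hfact0 : (0:ℝ) ≤ 2*ρ := by linarith
      calc (1 + Real.cos (2*Real.pi*((t:ℝ)*θ i + 1/Sr)))
            * ∏ j ∈ Finset.univ.erase i, (1 + Real.cos (2*Real.pi*((t:ℝ)*θ j + 1/Sr)))
          ≤ (2*ρ) * 2^(m-1) := by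
            apply mul_le_mul hfact hrest hrest0 hfact0
        _ = 2^m * ρ := by
            have hm1 : m - 1 + 1 = m := Nat.succ_pred_eq_of_pos hm
            have h2m : (2:ℝ)^m = 2^(m-1)*2 := by
              conv_lhs => rw [← hm1]
              rw [pow_succ]
            rw [h2m]
            ring
    exact hprod
  -- now key : choose^m ≤ 2^(p*m) * (2^m*ρ)^p
  have hc4 : ((2*p).choose p : ℝ)^m ≤ 4^(p*m) * ρ^p := by
    calc ((2*p).choose p : ℝ)^m ≤ 2^(p*m) * (2^m*ρ)^p := key
      _ = 4^(p*m) * ρ^p := by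
        rw [mul_pow, ← pow_mul]
        rw [show (4:ℝ) = 2*2 by norm_num, mul_pow, mul_comm m p]
        ring
  -- central binomial lower bound
  have hcb : (4:ℝ)^p ≤ (2*(p:ℝ)) * ((2*p).choose p : ℝ) := by
    have := Nat.four_pow_le_two_mul_self_mul_centralBinom p hp1
    rw [Nat.centralBinom] at this
    exact_mod_cast this
  have hcbm : (4:ℝ)^(p*m) ≤ (2*(p:ℝ))^m * ((2*p).choose p : ℝ)^m := by
    calc (4:ℝ)^(p*m) = ((4:ℝ)^p)^m := by rw [pow_mul]
      _ ≤ ((2*(p:ℝ)) * ((2*p).choose p : ℝ))^m := by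
          apply pow_le_pow_left₀ (by positivity) hcb
      _ = (2*(p:ℝ))^m * ((2*p).choose p : ℝ)^m := mul_pow _ _ _
  have h4pos : (0:ℝ) < 4^(p*m) := by positivity
  have hfin : (1:ℝ) ≤ (2*(p:ℝ))^m * ρ^p := by
    have h1 : (4:ℝ)^(p*m) ≤ (2*(p:ℝ))^m * (4^(p*m) * ρ^p) := by
      calc (4:ℝ)^(p*m) ≤ (2*(p:ℝ))^m * ((2*p).choose p : ℝ)^m := hcbm
        _ ≤ (2*(p:ℝ))^m * (4^(p*m) * ρ^p) := by
            apply mul_le_mul_of_nonneg_left hc4 (by positivity)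
    nlinarith [h4pos]
  linarith
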